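/- Let ℓ ≥ 2 and τ ≥ 2, and set f_{ℓ−1}(s) = (1−v)^{ℓ−1} v where v = √(s/(τ−1)). Then ∫_0^{τ−1} f_{ℓ−1}(s)² ds = 2(τ−1)·(2ℓ−2)!·3!/(2ℓ+2)! ≤ 12(τ−1)/(2ℓ)^4, and hence Σ_{s=τ_0}^{τ−1} f_{ℓ−1}(s)² ≤ 1 + (τ−1)/ℓ^4. -/

import Mathlib

lemma beta34 (n : ℕ) : (∫ v in (0:ℝ)..1, (1-v)^n * v^3)
    = 6 / (((n:ℝ)+1)*((n:ℝ)+2)*((n:ℝ)+3)*((n:ℝ)+4)) := by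
  have h := intervalIntegral.integral_comp_sub_left (a := (0:ℝ)) (b := 1)
    (fun w : ℝ => w^n * (1-w)^3) 1
  simp only [sub_zero, sub_self] at h
  have e1 : (∫ v in (0:ℝ)..1, (1-v)^n * v^3)
      = ∫ v in (0:ℝ)..1, ((1-v)^n * (1-(1-v))^3) := by
    congr 1; ext v; ring_nf
  rw [e1, h]
  have e2 : ∀ w : ℝ, w^n * (1-w)^3 = w^n - 3*w^(n+1) + 3*w^(n+2) - w^(n+3) := by
    intro w; ring
  simp only [e2]
  have ip : ∀ k : ℕ, IntervalIntegrable (fun w : ℝ => w^k) MeasureTheory.volume 0 1 :=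
    fun k => (continuous_pow k).intervalIntegrable 0 1
  rw [intervalIntegral.integral_sub, intervalIntegral.integral_add,
    intervalIntegral.integral_sub, intervalIntegral.integral_const_mul,
    intervalIntegral.integral_const_mul]
  · simp only [integral_pow]
    push_cast
    have h1 : (n:ℝ)+1 ≠ 0 := by positivity
    have h2 : (n:ℝ)+2 ≠ 0 := by positivity
    have h3 : (n:ℝ)+3 ≠ 0 := by positivity
    have h4 : (n:ℝ)+4 ≠ 0 := by positivity
    field_simp
    ring
  · exact ip n
  · exact (ip (n+1)).const_mul 3
  · exact ((ip n).sub ((ip (n+1)).const_mul 3))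
  · exact (ip (n+2)).const_mul 3
  · exact (((ip n).sub ((ip (n+1)).const_mul 3)).add ((ip (n+2)).const_mul 3))
  · exact ip (n+3)

lemma part1 (ℓ : ℕ) (hℓ : 2 ≤ ℓ) (T : ℝ) (hT : 0 < T) :
    (∫ s in (0:ℝ)..T, ((1 - Real.sqrt (s/T))^(ℓ-1) * Real.sqrt (s/T))^2)
    = 2 * T * ((2*ℓ-2).factorial : ℝ) * (Nat.factorial 3 : ℝ) / ((2*ℓ+2).factorial : ℝ) := by
  set G : ℝ → ℝ := fun s => ((1 - Real.sqrt (s/T))^(ℓ-1) * Real.sqrt (s/T))^2 with hGdef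
  have hGc : Continuous G := by
    apply Continuous.pow
    exact ((continuous_const.sub ((Real.continuous_sqrt).comp
      (continuous_id.div_const T))).pow _).mul
      ((Real.continuous_sqrt).comp (continuous_id.div_const T))
  have hderiv : ∀ x ∈ Set.uIcc (0:ℝ) 1, HasDerivAt (fun v => T * v^2) (2*T*x) x := by
    intro x _
    have := ((hasDerivAt_pow 2 x).const_mul T)
    simpa [mul_comm, mul_assoc, mul_left_comm] using this
  have hsub := intervalIntegral.integral_comp_smul_deriv hderiv
    ((continuous_const.mul continuous_id).continuousOn) hGc
  have h01 : T * (0:ℝ)^2 = 0 := by ring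
  have h11 : T * (1:ℝ)^2 = T := by ring
  rw [h01, h11] at hsub
  have hcongr : (∫ v in (0:ℝ)..1, (2*T*v) • ((G ∘ fun v => T * v^2) v))
      = ∫ v in (0:ℝ)..1, 2*T*((1-v)^(2*ℓ-2) * v^3) := by
    apply intervalIntegral.integral_congr
    intro v hv
    rw [Set.uIcc_of_le (by norm_num : (0:ℝ) ≤ 1)] at hv
    obtain ⟨hv0, hv1⟩ := hv
    have hTv : T * v^2 / T = v^2 := by field_simp
    have hsq : Real.sqrt (T * v^2 / T) = v := by
      rw [hTv, Real.sqrt_sq hv0]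
    simp only [Function.comp, hGdef, smul_eq_mul, hsq]
    have he : ((1-v)^(ℓ-1) * v)^2 = (1-v)^(2*ℓ-2) * v^2 := by
      rw [mul_pow, ← pow_mul]
      congr 2
      omega
    rw [he]; ring
  rw [hcongr] at hsub
  rw [← hsub, intervalIntegral.integral_const_mul, beta34 (2*ℓ-2)]
  -- factorial identity
  set n := 2*ℓ-2 with hn
  have h4 : 2*ℓ+2 = n+4 := by omega
  rw [h4]
  have hfac : ((n+4).factorial : ℝ)
      = ((n:ℝ)+4)*((n:ℝ)+3)*((n:ℝ)+2)*((n:ℝ)+1) * (n.factorial : ℝ) := by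
    rw [show n+4 = (n+3)+1 by ring, Nat.factorial_succ,
      show n+3 = (n+2)+1 by ring, Nat.factorial_succ,
      show n+2 = (n+1)+1 by ring, Nat.factorial_succ, Nat.factorial_succ]
    push_cast; ring
  rw [hfac]
  have h1 : (n:ℝ)+1 ≠ 0 := by positivity
  have h2 : (n:ℝ)+2 ≠ 0 := by positivity
  have h3 : (n:ℝ)+3 ≠ 0 := by positivity
  have h4' : (n:ℝ)+4 ≠ 0 := by positivity
  have hnf : (n.factorial : ℝ) ≠ 0 := by positivity
  rw [show Nat.factorial 3 = 6 by rfl]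
  push_cast
  field_simp

lemma part2 (ℓ : ℕ) (hℓ : 2 ≤ ℓ) (T : ℝ) (hT : 0 ≤ T) :
    2 * T * ((2*ℓ-2).factorial : ℝ) * (Nat.factorial 3 : ℝ) / ((2*ℓ+2).factorial : ℝ)
    ≤ 12 * T / (2 * (ℓ:ℝ))^4 := by
  set n := 2*ℓ-2 with hn
  have h4 : 2*ℓ+2 = n+4 := by omega
  have hfac : ((n+4).factorial : ℝ)
      = ((n:ℝ)+4)*((n:ℝ)+3)*((n:ℝ)+2)*((n:ℝ)+1) * (n.factorial : ℝ) := by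
    rw [show n+4 = (n+3)+1 by ring, Nat.factorial_succ,
      show n+3 = (n+2)+1 by ring, Nat.factorial_succ,
      show n+2 = (n+1)+1 by ring, Nat.factorial_succ, Nat.factorial_succ]
    push_cast; ring
  rw [h4, hfac, show Nat.factorial 3 = 6 by rfl]
  have hnf : (0:ℝ) < (n.factorial : ℝ) := by positivity
  have hx : (2:ℝ) ≤ (ℓ:ℝ) := by exact_mod_cast hℓ
  have hcast : (n:ℝ) = 2*(ℓ:ℝ) - 2 := by
    have : (n:ℕ) = 2*ℓ-2 := hn
    have h2 : 2 ≤ 2*ℓ := by omega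
    push_cast [hn, Nat.cast_sub h2]
    ring
  rw [hcast]
  have key : (2*(ℓ:ℝ))^4 ≤ (2*(ℓ:ℝ)-2+4)*(2*(ℓ:ℝ)-2+3)*(2*(ℓ:ℝ)-2+2)*(2*(ℓ:ℝ)-2+1) := by
    nlinarith [sq_nonneg ((ℓ:ℝ)), sq_nonneg ((ℓ:ℝ)-2)]
  have hP : (0:ℝ) < (2*(ℓ:ℝ)-2+4)*(2*(ℓ:ℝ)-2+3)*(2*(ℓ:ℝ)-2+2)*(2*(ℓ:ℝ)-2+1) := by
    nlinarith
  have hl4 : (0:ℝ) < (2*(ℓ:ℝ))^4 := by positivity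
  rw [div_le_div_iff₀ (by positivity) hl4]
  have h12 : 2 * T * (n.factorial:ℝ) * 6 = 12 * T * (n.factorial:ℝ) := by ring
  calc 2 * T * (n.factorial:ℝ) * 6 * (2*(ℓ:ℝ))^4
      = 12 * T * ((2*(ℓ:ℝ))^4 * (n.factorial:ℝ)) := by ring
    _ ≤ 12 * T * ((2*(ℓ:ℝ)-2+4)*(2*(ℓ:ℝ)-2+3)*(2*(ℓ:ℝ)-2+2)*(2*(ℓ:ℝ)-2+1) * (n.factorial:ℝ)) := by
        apply mul_le_mul_of_nonneg_left _ (by linarith : (0:ℝ) ≤ 12*T)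
        exact mul_le_mul_of_nonneg_right key hnf.le
    _ = 12 * T * ((2*(ℓ:ℝ)-2+4)*((2*(ℓ:ℝ)-2+3)*((2*(ℓ:ℝ)-2+2)*((2*(ℓ:ℝ)-2+1)*(n.factorial:ℝ))))) := by ring
    _ = 12 * T * ((2*(ℓ:ℝ)-2+4)*(2*(ℓ:ℝ)-2+3)*(2*(ℓ:ℝ)-2+2)*(2*(ℓ:ℝ)-2+1)*(n.factorial:ℝ)) := by ring

lemma u_deriv (ℓ : ℕ) (hℓ : 2 ≤ ℓ) (v : ℝ) :
    HasDerivAt (fun v : ℝ => (1-v)^(ℓ-1) * v) ((1-v)^(ℓ-2) * (1 - (ℓ:ℝ)*v)) v := by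
  have h1 : HasDerivAt (fun v : ℝ => 1 - v) (-1) v := (hasDerivAt_id v).const_sub 1
  have h2 := (h1.pow (ℓ-1)).mul (hasDerivAt_id v)
  refine h2.congr_deriv ?_
  have he : ℓ - 1 = (ℓ-2) + 1 := by omega
  have he2 : ℓ - 1 - 1 = ℓ - 2 := by omega
  rw [he2, he, pow_succ]
  have hc : ((ℓ-2+1 : ℕ) : ℝ) = (ℓ:ℝ) - 1 := by
    push_cast [Nat.cast_sub hℓ]; ring
  rw [hc]
  simp only [id, Pi.mul_apply, Pi.pow_apply]
  ring

lemma u_mono (ℓ : ℕ) (hℓ : 2 ≤ ℓ) :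
    MonotoneOn (fun v : ℝ => (1-v)^(ℓ-1) * v) (Set.Icc 0 (1/(ℓ:ℝ))) := by
  have hℓR : (0:ℝ) < (ℓ:ℝ) := by positivity
  apply monotoneOn_of_deriv_nonneg (convex_Icc _ _)
  · exact (Continuous.mul (by continuity) continuous_id).continuousOn
  · intro x _
    exact (u_deriv ℓ hℓ x).differentiableAt.differentiableWithinAt
  · intro x hx
    rw [interior_Icc] at hx
    rw [(u_deriv ℓ hℓ x).deriv]
    have hx1 : x < 1/(ℓ:ℝ) := hx.2
    have : (ℓ:ℝ) * x < 1 := by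
      rw [div_eq_mul_inv] at hx1
      calc (ℓ:ℝ)*x < (ℓ:ℝ)*(1/(ℓ:ℝ)) := by
            apply mul_lt_mul_of_pos_left hx.2 hℓR
        _ = 1 := by field_simp
    have hx2 : x < 1 := by
      have h2 : (2:ℝ) ≤ (ℓ:ℝ) := by exact_mod_cast hℓ
      nlinarith [hx.1]
    apply mul_nonneg (pow_nonneg (by linarith) _) (by linarith)

lemma u_anti (ℓ : ℕ) (hℓ : 2 ≤ ℓ) :
    AntitoneOn (fun v : ℝ => (1-v)^(ℓ-1) * v) (Set.Icc (1/(ℓ:ℝ)) 1) := by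
  apply antitoneOn_of_deriv_nonpos (convex_Icc _ _)
  · exact (Continuous.mul (by continuity) continuous_id).continuousOn
  · intro x _
    exact (u_deriv ℓ hℓ x).differentiableAt.differentiableWithinAt
  · intro x hx
    rw [interior_Icc] at hx
    rw [(u_deriv ℓ hℓ x).deriv]
    have hℓR : (0:ℝ) < (ℓ:ℝ) := by positivity
    have : 1 ≤ (ℓ:ℝ) * x := by
      calc (1:ℝ) = (ℓ:ℝ) * (1/(ℓ:ℝ)) := by field_simp
        _ ≤ (ℓ:ℝ) * x := by
            apply mul_le_mul_of_nonneg_left hx.1.le hℓR.le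
    apply mul_nonpos_of_nonneg_of_nonpos (pow_nonneg (by linarith [hx.2]) _) (by linarith)

lemma const_le_integral {G : ℝ → ℝ} (hGc : Continuous G) {a c : ℝ}
    (h : ∀ t ∈ Set.Icc a (a+1), c ≤ G t) : c ≤ ∫ t in a..(a+1), G t := by
  have h0 : c = ∫ _ in a..(a+1), (c:ℝ) := by
    rw [intervalIntegral.integral_const]; simp
  rw [h0]
  exact intervalIntegral.integral_mono_on (by linarith) intervalIntegrable_const
    (hGc.intervalIntegrable _ _) h

section part3
variable (ℓ τ : ℕ)

set_option maxHeartbeats 2000000 in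
lemma part3 (hℓ : 2 ≤ ℓ) (hτ : 2 ≤ τ)
    (hint : (∫ s in (0:ℝ)..((τ:ℝ)-1),
        ((1 - Real.sqrt (s / ((τ:ℝ)-1)))^(ℓ-1) * Real.sqrt (s / ((τ:ℝ)-1)))^2)
      ≤ 12 * ((τ:ℝ)-1) / (2*(ℓ:ℝ))^4) (τ₀ : ℕ) :
    ∑ s ∈ Finset.Icc τ₀ (τ - 1),
        ((1 - Real.sqrt ((s:ℝ) / ((τ:ℝ)-1)))^(ℓ-1) * Real.sqrt ((s:ℝ) / ((τ:ℝ)-1)))^2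
      ≤ 1 + ((τ:ℝ)-1) / (ℓ:ℝ)^4 := by
  have hτR : (2:ℝ) ≤ (τ:ℝ) := by exact_mod_cast hτ
  have hℓR : (2:ℝ) ≤ (ℓ:ℝ) := by exact_mod_cast hℓ
  have hℓ0 : (0:ℝ) < (ℓ:ℝ) := by linarith
  set T : ℝ := (τ:ℝ) - 1 with hTdef
  have hT1 : 1 ≤ T := by simp only [hTdef]; linarith
  have hT0 : 0 < T := by linarith
  set N : ℕ := τ - 1 with hNdef
  have hN1 : 1 ≤ N := by omega
  have hNc : ((N:ℕ):ℝ) = T := by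
    simp only [hNdef, hTdef]
    push_cast [Nat.cast_sub (show 1 ≤ τ by omega)]
    ring
  set G : ℝ → ℝ := fun s => ((1 - Real.sqrt (s/T))^(ℓ-1) * Real.sqrt (s/T))^2 with hGdef
  have hGc : Continuous G := by
    apply Continuous.pow
    exact ((continuous_const.sub ((Real.continuous_sqrt).comp
      (continuous_id.div_const T))).pow _).mul
      ((Real.continuous_sqrt).comp (continuous_id.div_const T))
  have hGnn : ∀ s : ℝ, 0 ≤ G s := fun s => sq_nonneg _
  set u : ℝ → ℝ := fun v => (1-v)^(ℓ-1) * v with hudef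
  have hGu : ∀ s : ℝ, G s = (u (Real.sqrt (s/T)))^2 := fun s => rfl
  -- sqrt facts
  have hsq01 : ∀ s : ℝ, 0 ≤ s → s ≤ T → Real.sqrt (s/T) ∈ Set.Icc (0:ℝ) 1 := by
    intro s h0 h1
    refine ⟨Real.sqrt_nonneg _, Real.sqrt_le_one.mpr ?_⟩
    rw [div_le_one hT0]; exact h1
  have hinvl : Real.sqrt ((1:ℝ)/(ℓ:ℝ)^2) = 1/(ℓ:ℝ) := by
    rw [show (1:ℝ)/(ℓ:ℝ)^2 = (1/(ℓ:ℝ))^2 by ring, Real.sqrt_sq (by positivity)]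
  have hsq_lo : ∀ s : ℝ, 0 ≤ s → s ≤ T/(ℓ:ℝ)^2 → Real.sqrt (s/T) ≤ 1/(ℓ:ℝ) := by
    intro s h0 h1
    rw [← hinvl]
    apply Real.sqrt_le_sqrt
    rw [div_le_div_iff₀ hT0 (by positivity)]
    calc s * (ℓ:ℝ)^2 ≤ (T/(ℓ:ℝ)^2) * (ℓ:ℝ)^2 := by
          apply mul_le_mul_of_nonneg_right h1 (by positivity)
      _ = 1 * T := by field_simp
  have hsq_hi : ∀ s : ℝ, T/(ℓ:ℝ)^2 ≤ s → 1/(ℓ:ℝ) ≤ Real.sqrt (s/T) := by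
    intro s h1
    rw [← hinvl]
    apply Real.sqrt_le_sqrt
    rw [div_le_div_iff₀ (by positivity) hT0]
    calc (1:ℝ) * T = (T/(ℓ:ℝ)^2) * (ℓ:ℝ)^2 := by field_simp
      _ ≤ s * (ℓ:ℝ)^2 := by
          apply mul_le_mul_of_nonneg_right h1 (by positivity)
  -- u mono/anti (from t2 lemmas, inlined as axioms here for now)
  have hu_mono : MonotoneOn u (Set.Icc 0 (1/(ℓ:ℝ))) := u_mono ℓ hℓ
  have hu_anti : AntitoneOn u (Set.Icc (1/(ℓ:ℝ)) 1) := u_anti ℓ hℓ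
  have hu_nn : ∀ v ∈ Set.Icc (0:ℝ) 1, 0 ≤ u v := by
    intro v hv
    exact mul_nonneg (pow_nonneg (by linarith [hv.2]) _) hv.1
  -- G monotone/antitone
  have hGmono : MonotoneOn G (Set.Icc 0 (T/(ℓ:ℝ)^2)) := by
    intro s₁ h₁ s₂ h₂ h12
    have hTl : T/(ℓ:ℝ)^2 ≤ T := by
      rw [div_le_iff₀ (by positivity)]
      have h1l : (1:ℝ) ≤ (ℓ:ℝ)^2 := by nlinarith [hℓR]
      nlinarith [mul_le_mul_of_nonneg_left h1l hT0.le]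
    have hv₁ := hsq01 s₁ h₁.1 (h₁.2.trans hTl)
    have hv₂ := hsq01 s₂ h₂.1 (h₂.2.trans hTl)
    have hw₁ : Real.sqrt (s₁/T) ∈ Set.Icc (0:ℝ) (1/(ℓ:ℝ)) :=
      ⟨hv₁.1, hsq_lo s₁ h₁.1 h₁.2⟩
    have hw₂ : Real.sqrt (s₂/T) ∈ Set.Icc (0:ℝ) (1/(ℓ:ℝ)) :=
      ⟨hv₂.1, hsq_lo s₂ h₂.1 h₂.2⟩
    have hvle : Real.sqrt (s₁/T) ≤ Real.sqrt (s₂/T) :=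
      Real.sqrt_le_sqrt (by gcongr)
    rw [hGu, hGu]
    exact pow_le_pow_left₀ (hu_nn _ ⟨hv₁.1, hv₁.2⟩) (hu_mono hw₁ hw₂ hvle) 2
  have hGanti : AntitoneOn G (Set.Icc (T/(ℓ:ℝ)^2) T) := by
    intro s₁ h₁ s₂ h₂ h12
    have hT2nn : 0 ≤ T/(ℓ:ℝ)^2 := by positivity
    have hv₁ := hsq01 s₁ (hT2nn.trans h₁.1) h₁.2
    have hv₂ := hsq01 s₂ (hT2nn.trans h₂.1) h₂.2
    have hw₁ : Real.sqrt (s₁/T) ∈ Set.Icc (1/(ℓ:ℝ)) 1 := ⟨hsq_hi s₁ h₁.1, hv₁.2⟩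
    have hw₂ : Real.sqrt (s₂/T) ∈ Set.Icc (1/(ℓ:ℝ)) 1 := ⟨hsq_hi s₂ h₂.1, hv₂.2⟩
    have hvle : Real.sqrt (s₁/T) ≤ Real.sqrt (s₂/T) :=
      Real.sqrt_le_sqrt (by gcongr)
    rw [hGu, hGu]
    exact pow_le_pow_left₀ (hu_nn _ hv₂) (hu_anti hw₁ hw₂ hvle) 2
  -- pointwise bound
  have hGle : ∀ s : ℝ, 0 ≤ s → s ≤ T → G s ≤ 1/16 := by
    intro s h0 h1
    have hv := hsq01 s h0 h1
    set v := Real.sqrt (s/T)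
    have hsplit : (1-v)^(ℓ-1) * v = (1-v)^(ℓ-2) * ((1-v)*v) := by
      rw [show ℓ-1 = (ℓ-2)+1 by omega, pow_succ]; ring
    have h1v : 0 ≤ 1 - v := by linarith [hv.2]
    have hb1 : (1-v)^(ℓ-2) ≤ 1 := pow_le_one₀ h1v (by linarith [hv.1])
    have hb2 : (1-v)*v ≤ 1/4 := by nlinarith [sq_nonneg (1-2*v)]
    have hx : 0 ≤ (1-v)^(ℓ-1) * v := mul_nonneg (pow_nonneg h1v _) hv.1
    have hxle : (1-v)^(ℓ-1) * v ≤ 1/4 := by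
      rw [hsplit]
      calc (1-v)^(ℓ-2) * ((1-v)*v) ≤ 1 * (1/4) := by
            apply mul_le_mul hb1 hb2 (mul_nonneg h1v hv.1) (by norm_num)
        _ = 1/4 := by norm_num
    show ((1-v)^(ℓ-1) * v)^2 ≤ 1/16
    nlinarith
  -- mode index
  set m : ℕ := N / ℓ^2 with hmdef
  have h4l : 4 ≤ ℓ^2 := by
    calc 4 = 2^2 := rfl
      _ ≤ ℓ^2 := Nat.pow_le_pow_left hℓ 2
  have hml : m * ℓ^2 ≤ N := Nat.div_mul_le_self _ _
  have h4m : 4*m ≤ N := by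
    calc 4*m = m*4 := by ring
      _ ≤ m*ℓ^2 := Nat.mul_le_mul_left m h4l
      _ ≤ N := hml
  have hm1N : m + 1 ≤ N := by omega
  have hmN : m ≤ N := by omega
  have hmr : (m:ℝ) ≤ T/(ℓ:ℝ)^2 := by
    rw [le_div_iff₀ (by positivity)]
    calc (m:ℝ)*(ℓ:ℝ)^2 = ((m*ℓ^2 : ℕ):ℝ) := by push_cast; ring
      _ ≤ ((N:ℕ):ℝ) := by exact_mod_cast hml
      _ = T := hNc
  have hmr2 : T/(ℓ:ℝ)^2 ≤ (m:ℝ)+1 := by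
    rw [div_le_iff₀ (by positivity)]
    have hlt : N < (m+1)*ℓ^2 := by
      have h2 := Nat.mod_lt N (show 0 < ℓ^2 by omega)
      calc N = ℓ^2*(N/ℓ^2) + N%ℓ^2 := (Nat.div_add_mod _ _).symm
        _ < ℓ^2*(N/ℓ^2) + ℓ^2 := by omega
        _ = (N/ℓ^2+1)*ℓ^2 := by ring
    calc T = ((N:ℕ):ℝ) := hNc.symm
      _ ≤ (((m+1)*ℓ^2 : ℕ):ℝ) := by exact_mod_cast hlt.le
      _ = ((m:ℝ)+1)*(ℓ:ℝ)^2 := by push_cast; ring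
  have hIntegrable : ∀ a b : ℝ, IntervalIntegrable G MeasureTheory.volume a b :=
    fun a b => hGc.intervalIntegrable a b
  -- step bounds
  have h_inc : ∀ s : ℕ, s < m → G (s:ℝ) ≤ ∫ t in (s:ℝ)..((s:ℝ)+1), G t := by
    intro s hs
    apply const_le_integral hGc
    intro t ht
    have hs1 : (s:ℝ)+1 ≤ (m:ℝ) := by exact_mod_cast Nat.succ_le_of_lt hs
    have hsnn : (0:ℝ) ≤ (s:ℝ) := Nat.cast_nonneg s
    have hsmem : (s:ℝ) ∈ Set.Icc 0 (T/(ℓ:ℝ)^2) := ⟨hsnn, by linarith⟩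
    have htmem : t ∈ Set.Icc 0 (T/(ℓ:ℝ)^2) := ⟨by linarith [ht.1], by linarith [ht.2]⟩
    exact hGmono hsmem htmem ht.1
  have h_dec : ∀ s : ℕ, m+2 ≤ s → s ≤ N → G (s:ℝ) ≤ ∫ t in ((s:ℝ)-1)..(s:ℝ), G t := by
    intro s hs2 hsN
    rw [show (∫ t in ((s:ℝ)-1)..(s:ℝ), G t) = ∫ t in ((s:ℝ)-1)..(((s:ℝ)-1)+1), G t by
      norm_num]
    apply const_le_integral hGc
    intro t ht
    have hm2 : (m:ℝ)+2 ≤ (s:ℝ) := by exact_mod_cast (show ((m+2:ℕ):ℝ) ≤ (s:ℝ) by exact_mod_cast hs2)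
    have hsT : (s:ℝ) ≤ T := by rw [← hNc]; exact_mod_cast hsN
    have htmem : t ∈ Set.Icc (T/(ℓ:ℝ)^2) T := ⟨by linarith [ht.1], by linarith [ht.2]⟩
    have hsmem : (s:ℝ) ∈ Set.Icc (T/(ℓ:ℝ)^2) T := ⟨by linarith, hsT⟩
    exact hGanti htmem hsmem (by linarith [ht.2])
  -- reduce to sum over range (N+1)
  show ∑ s ∈ Finset.Icc τ₀ N, G (s:ℝ) ≤ 1 + T/(ℓ:ℝ)^4
  have hsubset : Finset.Icc τ₀ N ⊆ Finset.range (N+1) := by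
    intro x hx; simp only [Finset.mem_Icc] at hx; simp only [Finset.mem_range]; omega
  have hstep0 : ∑ s ∈ Finset.Icc τ₀ N, G (s:ℝ) ≤ ∑ s ∈ Finset.range (N+1), G (s:ℝ) :=
    Finset.sum_le_sum_of_subset_of_nonneg hsubset (fun i _ _ => hGnn _)
  have hsplit : ∑ s ∈ Finset.range (N+1), G (s:ℝ)
      = (∑ s ∈ Finset.range m, G (s:ℝ)) + G ((m:ℕ):ℝ) + G ((m+1:ℕ):ℝ)
        + ∑ s ∈ Finset.Ico (m+2) (N+1), G (s:ℝ) := by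
    have h1 : ∑ s ∈ Finset.range (N+1), G (s:ℝ)
        = (∑ s ∈ Finset.range (m+2), G (s:ℝ)) + ∑ s ∈ Finset.Ico (m+2) (N+1), G (s:ℝ) := by
      rw [Finset.range_eq_Ico, Finset.range_eq_Ico]
      exact (Finset.sum_Ico_consecutive _ (Nat.zero_le _) (by omega : m+2 ≤ N+1)).symm
    rw [h1, Finset.sum_range_succ, Finset.sum_range_succ]
  have hA : ∑ s ∈ Finset.range m, G (s:ℝ) ≤ ∫ t in (0:ℝ)..(m:ℝ), G t := by
    calc ∑ s ∈ Finset.range m, G (s:ℝ)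
        ≤ ∑ s ∈ Finset.range m, ∫ t in (s:ℝ)..((s:ℝ)+1), G t :=
          Finset.sum_le_sum (fun s hs => h_inc s (Finset.mem_range.mp hs))
      _ = ∫ t in (0:ℝ)..(m:ℝ), G t := by
          have hadj := intervalIntegral.sum_integral_adjacent_intervals
            (a := fun i : ℕ => (i:ℝ)) (n := m) (μ := MeasureTheory.volume) (f := G)
            (fun k _ => hIntegrable _ _)
          simp only [Nat.cast_zero] at hadj
          rw [← hadj]
          apply Finset.sum_congr rfl
          intro i _
          congr 1
          push_cast
          ring
  have hB : ∑ s ∈ Finset.Ico (m+2) (N+1), G (s:ℝ) ≤ ∫ t in ((m:ℝ)+1)..((N:ℕ):ℝ), G t := by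
    rw [Finset.sum_Ico_eq_sum_range]
    have hKc : ((N+1-(m+2) : ℕ):ℝ) = ((N:ℕ):ℝ) - (m:ℝ) - 1 := by
      rw [show N+1-(m+2) = N-(m+1) from by omega]
      push_cast [Nat.cast_sub (show m+1 ≤ N by omega)]
      ring
    calc ∑ i ∈ Finset.range (N+1-(m+2)), G ((m+2+i : ℕ):ℝ)
        ≤ ∑ i ∈ Finset.range (N+1-(m+2)), ∫ t in ((m:ℝ)+1+(i:ℝ))..((m:ℝ)+1+((i:ℝ)+1)), G t := by
          apply Finset.sum_le_sum
          intro i hi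
          have hi' := Finset.mem_range.mp hi
          have h1 : m+2 ≤ m+2+i := by omega
          have h2 : m+2+i ≤ N := by omega
          have hd := h_dec (m+2+i) h1 h2
          rw [show (m:ℝ)+1+(i:ℝ) = ((m+2+i : ℕ):ℝ) - 1 from by push_cast; ring,
            show (m:ℝ)+1+((i:ℝ)+1) = ((m+2+i : ℕ):ℝ) from by push_cast; ring]
          exact hd
      _ = ∫ t in ((m:ℝ)+1)..((m:ℝ)+1+((N+1-(m+2) : ℕ):ℝ)), G t := by
          have hadj := intervalIntegral.sum_integral_adjacent_intervals
            (a := fun i : ℕ => (m:ℝ)+1+(i:ℝ)) (n := N+1-(m+2)) (μ := MeasureTheory.volume)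
            (f := G) (fun k _ => hIntegrable _ _)
          simp only [Nat.cast_zero, add_zero] at hadj
          rw [← hadj]
          apply Finset.sum_congr rfl
          intro i _
          congr 1
          push_cast
          ring
      _ = ∫ t in ((m:ℝ)+1)..((N:ℕ):ℝ), G t := by
          congr 1
          rw [hKc]
          ring
  have hC : (∫ t in (0:ℝ)..(m:ℝ), G t) + (∫ t in ((m:ℝ)+1)..((N:ℕ):ℝ), G t)
      ≤ ∫ t in (0:ℝ)..((N:ℕ):ℝ), G t := by
    have e1 : (∫ t in (0:ℝ)..(m:ℝ), G t) + (∫ t in (m:ℝ)..((m:ℝ)+1), G t)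
        = ∫ t in (0:ℝ)..((m:ℝ)+1), G t :=
      intervalIntegral.integral_add_adjacent_intervals (hIntegrable _ _) (hIntegrable _ _)
    have e2 : (∫ t in (0:ℝ)..((m:ℝ)+1), G t) + (∫ t in ((m:ℝ)+1)..((N:ℕ):ℝ), G t)
        = ∫ t in (0:ℝ)..((N:ℕ):ℝ), G t :=
      intervalIntegral.integral_add_adjacent_intervals (hIntegrable _ _) (hIntegrable _ _)
    have e3 : 0 ≤ ∫ t in (m:ℝ)..((m:ℝ)+1), G t :=
      intervalIntegral.integral_nonneg (by linarith) (fun x _ => hGnn x)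
    linarith
  have hGm : G ((m:ℕ):ℝ) ≤ 1/16 := by
    apply hGle _ (Nat.cast_nonneg m)
    rw [← hNc]; exact_mod_cast hmN
  have hGm1 : G ((m+1:ℕ):ℝ) ≤ 1/16 := by
    apply hGle _ (Nat.cast_nonneg _)
    rw [← hNc]; exact_mod_cast hm1N
  have hint' : ∫ t in (0:ℝ)..((N:ℕ):ℝ), G t ≤ 12*T/(2*(ℓ:ℝ))^4 := by rw [hNc]; exact hint
  have hfinal : 12*T/(2*(ℓ:ℝ))^4 + 1/8 ≤ 1 + T/(ℓ:ℝ)^4 := by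
    have h16 : (2*(ℓ:ℝ))^4 = 16*(ℓ:ℝ)^4 := by ring
    rw [h16]
    have hl4 : (0:ℝ) < (ℓ:ℝ)^4 := by positivity
    have hdd : 12*T/(16*(ℓ:ℝ)^4) ≤ T/(ℓ:ℝ)^4 := by
      rw [div_le_div_iff₀ (by positivity) hl4]
      nlinarith [mul_nonneg hT0.le hl4.le]
    linarith
  rw [hsplit] at hstep0
  linarith [hA, hB, hC, hGm, hGm1, hint', hfinal]

end part3

theorem stmt13 (ℓ τ : ℕ) (hℓ : 2 ≤ ℓ) (hτ : 2 ≤ τ) :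
    ((∫ s in (0:ℝ)..((τ : ℝ) - 1),
        ((1 - Real.sqrt (s / ((τ : ℝ) - 1))) ^ (ℓ - 1) * Real.sqrt (s / ((τ : ℝ) - 1))) ^ 2)
      = 2 * ((τ : ℝ) - 1) * ((2 * ℓ - 2).factorial : ℝ) * (Nat.factorial 3 : ℝ)
          / ((2 * ℓ + 2).factorial : ℝ)) ∧
    (2 * ((τ : ℝ) - 1) * ((2 * ℓ - 2).factorial : ℝ) * (Nat.factorial 3 : ℝ)
          / ((2 * ℓ + 2).factorial : ℝ)
      ≤ 12 * ((τ : ℝ) - 1) / (2 * (ℓ : ℝ)) ^ 4) ∧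
    (∀ τ₀ : ℕ,
      ∑ s ∈ Finset.Icc τ₀ (τ - 1),
          ((1 - Real.sqrt ((s : ℝ) / ((τ : ℝ) - 1))) ^ (ℓ - 1)
            * Real.sqrt ((s : ℝ) / ((τ : ℝ) - 1))) ^ 2
        ≤ 1 + ((τ : ℝ) - 1) / (ℓ : ℝ) ^ 4) := by
  have hτR : (2:ℝ) ≤ (τ:ℝ) := by exact_mod_cast hτ
  have hT0 : (0:ℝ) < (τ:ℝ) - 1 := by linarith
  have h1 := part1 ℓ hℓ ((τ:ℝ) - 1) hT0
  have h2 := part2 ℓ hℓ ((τ:ℝ) - 1) hT0.le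
  refine ⟨h1, h2, fun τ₀ => part3 ℓ τ hℓ hτ ?_ τ₀⟩
  rw [h1]
  exact h2
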